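/- Any reduced word of order n may be transformed into any other reduced word of order n by a finite sequence of commuting moves and braid moves. -/

import Mathlib

set_option maxRecDepth 8000

theorem Equiv.Perm.apply_inv_self {α : Type*} (f : Equiv.Perm α) (x : α) : f (f⁻¹ x) = x :=
  f.apply_symm_apply x

theorem Equiv.Perm.inv_apply_self {α : Type*} (f : Equiv.Perm α) (x : α) : f⁻¹ (f x) = x :=
  f.symm_apply_apply x

/-- The simple transposition `t(k)` of `Fin n` swapping positions `k` and `k+1`
(`0`-based; the identity if `k+1 ≥ n`). -/
def simpleSwap (n k : ℕ) : Equiv.Perm (Fin n) :=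
  if h : k + 1 < n then Equiv.swap ⟨k, Nat.lt_of_succ_lt h⟩ ⟨k + 1, h⟩ else 1

/-- The reverse permutation `ρ`. -/
def reversePerm (n : ℕ) : Equiv.Perm (Fin n) := ⟨Fin.rev, Fin.rev, Fin.rev_rev, Fin.rev_rev⟩

namespace TitsAux

variable {n : ℕ}

/-- inversion pairs -/
def ipairs (w : Equiv.Perm (Fin n)) : Finset (Fin n × Fin n) :=
  Finset.univ.filter fun p => p.1 < p.2 ∧ w p.2 < w p.1

def wlen (w : Equiv.Perm (Fin n)) : ℕ := (ipairs w).card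

def fa (a : ℕ) (h : a + 1 < n) : Fin n := ⟨a, Nat.lt_of_succ_lt h⟩
def fb (a : ℕ) (h : a + 1 < n) : Fin n := ⟨a + 1, h⟩

lemma simpleSwap_eq (a : ℕ) (h : a + 1 < n) :
    simpleSwap n a = Equiv.swap (fa a h) (fb a h) := dif_pos h

lemma fa_ne_fb (a : ℕ) (h : a + 1 < n) : fa a h ≠ fb a h := by
  simp [fa, fb, Fin.ext_iff]

/-- comparing images under an adjacent swap -/
lemma adj_swap_lt (a : ℕ) (h : a + 1 < n) (x y : Fin n) :
    Equiv.swap (fa a h) (fb a h) x < Equiv.swap (fa a h) (fb a h) y ↔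
      ((x < y ∧ ¬(x = fa a h ∧ y = fb a h)) ∨ (x = fb a h ∧ y = fa a h)) := by
  have hx := x.isLt; have hy := y.isLt
  obtain ⟨x, hx⟩ := x; obtain ⟨y, hy⟩ := y
  simp only [Equiv.swap_apply_def, fa, fb, Fin.mk.injEq, Fin.mk_lt_mk]
  split_ifs <;> simp_all [Fin.mk_lt_mk] <;> omega

end TitsAux

namespace TitsAux

variable {n : ℕ}

lemma mem_ipairs (w : Equiv.Perm (Fin n)) (x y : Fin n) :
    (x, y) ∈ ipairs w ↔ x < y ∧ w y < w x := by simp [ipairs]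

lemma fa_lt_fb (a : ℕ) (h : a + 1 < n) : fa a h < fb a h := by
  simp [fa, fb, Fin.lt_def]

lemma inv_ne (w : Equiv.Perm (Fin n)) (a : ℕ) (h : a + 1 < n) :
    w⁻¹ (fa a h) ≠ w⁻¹ (fb a h) := fun hc => fa_ne_fb a h (w⁻¹.injective hc)

lemma ipairs_desc (a : ℕ) (h : a + 1 < n) (w : Equiv.Perm (Fin n))
    (hd : w⁻¹ (fb a h) < w⁻¹ (fa a h)) :
    ipairs (simpleSwap n a * w) = (ipairs w).erase (w⁻¹ (fb a h), w⁻¹ (fa a h)) := by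
  ext ⟨x, y⟩
  rw [mem_ipairs]
  rw [simpleSwap_eq a h]
  simp only [ipairs, Finset.mem_erase, Finset.mem_filter, Finset.mem_univ, true_and,
    Equiv.Perm.mul_apply, Prod.mk.injEq, ne_eq, not_and]
  rw [adj_swap_lt]
  constructor
  · rintro ⟨hxy, ⟨hlt, hne⟩ | ⟨h1, h2⟩⟩
    · refine ⟨fun hx hy => ?_, hxy, hlt⟩
      exact hne ⟨by rw [hy, Equiv.Perm.apply_inv_self], by rw [hx, Equiv.Perm.apply_inv_self]⟩
    · exfalso
      have hx : x = w⁻¹ (fa a h) := by rw [← h2, Equiv.Perm.inv_apply_self]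
      have hy : y = w⁻¹ (fb a h) := by rw [← h1, Equiv.Perm.inv_apply_self]
      subst hx; subst hy; exact absurd hxy (not_lt.2 hd.le)
  · rintro ⟨hne, hxy, hlt⟩
    refine ⟨hxy, Or.inl ⟨hlt, fun ⟨h1, h2⟩ => ?_⟩⟩
    have hy : y = w⁻¹ (fa a h) := by rw [← h1, Equiv.Perm.inv_apply_self]
    have hx : x = w⁻¹ (fb a h) := by rw [← h2, Equiv.Perm.inv_apply_self]
    exact hne hx hy

lemma ipairs_asc (a : ℕ) (h : a + 1 < n) (w : Equiv.Perm (Fin n))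
    (ha : w⁻¹ (fa a h) < w⁻¹ (fb a h)) :
    ipairs (simpleSwap n a * w) = insert (w⁻¹ (fa a h), w⁻¹ (fb a h)) (ipairs w) := by
  ext ⟨x, y⟩
  rw [mem_ipairs]
  rw [simpleSwap_eq a h]
  simp only [ipairs, Finset.mem_insert, Finset.mem_filter, Finset.mem_univ, true_and,
    Equiv.Perm.mul_apply, Prod.mk.injEq]
  rw [adj_swap_lt]
  constructor
  · rintro ⟨hxy, ⟨hlt, _⟩ | ⟨h1, h2⟩⟩
    · exact Or.inr ⟨hxy, hlt⟩
    · refine Or.inl ⟨by rw [← h2, Equiv.Perm.inv_apply_self], by rw [← h1, Equiv.Perm.inv_apply_self]⟩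
  · rintro (⟨hx, hy⟩ | ⟨hxy, hlt⟩)
    · subst hx; subst hy
      exact ⟨ha, Or.inr ⟨Equiv.Perm.apply_inv_self _ _, Equiv.Perm.apply_inv_self _ _⟩⟩
    · refine ⟨hxy, Or.inl ⟨hlt, fun ⟨h1, h2⟩ => ?_⟩⟩
      have hy : y = w⁻¹ (fa a h) := by rw [← h1, Equiv.Perm.inv_apply_self]
      have hx : x = w⁻¹ (fb a h) := by rw [← h2, Equiv.Perm.inv_apply_self]
      subst hx; subst hy
      exact absurd hxy (not_lt.2 ha.le)

lemma wlen_desc (a : ℕ) (h : a + 1 < n) (w : Equiv.Perm (Fin n))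
    (hd : w⁻¹ (fb a h) < w⁻¹ (fa a h)) :
    wlen (simpleSwap n a * w) + 1 = wlen w := by
  have hm : (w⁻¹ (fb a h), w⁻¹ (fa a h)) ∈ ipairs w := by
    rw [mem_ipairs, Equiv.Perm.apply_inv_self, Equiv.Perm.apply_inv_self]
    exact ⟨hd, fa_lt_fb a h⟩
  rw [wlen, wlen, ipairs_desc a h w hd]
  exact Finset.card_erase_add_one hm

lemma wlen_asc (a : ℕ) (h : a + 1 < n) (w : Equiv.Perm (Fin n))
    (ha : w⁻¹ (fa a h) < w⁻¹ (fb a h)) :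
    wlen (simpleSwap n a * w) = wlen w + 1 := by
  have hm : (w⁻¹ (fa a h), w⁻¹ (fb a h)) ∉ ipairs w := by
    rw [mem_ipairs, Equiv.Perm.apply_inv_self, Equiv.Perm.apply_inv_self]
    rintro ⟨-, hc⟩
    exact absurd hc (not_lt.2 (fa_lt_fb a h).le)
  rw [wlen, wlen, ipairs_asc a h w ha, Finset.card_insert_of_notMem hm]

lemma simpleSwap_mul_self (a : ℕ) : simpleSwap n a * simpleSwap n a = 1 := by
  unfold simpleSwap
  split_ifs with h
  · exact Equiv.swap_mul_self _ _
  · exact mul_one 1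

lemma descent_iff (a : ℕ) (h : a + 1 < n) (w : Equiv.Perm (Fin n)) :
    wlen (simpleSwap n a * w) + 1 = wlen w ↔ w⁻¹ (fb a h) < w⁻¹ (fa a h) := by
  constructor
  · intro hw
    rcases lt_or_gt_of_ne (inv_ne w a h) with hlt | hgt
    · rw [wlen_asc a h w hlt] at hw; omega
    · exact hgt
  · exact wlen_desc a h w

end TitsAux

namespace TitsAux

variable {n : ℕ}

/-- a strictly monotone self-map of `Fin n` dominates the identity -/
lemma strictMono_le_apply {f : Fin n → Fin n} (hf : StrictMono f) : ∀ x, x ≤ f x := by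
  have key : ∀ k, ∀ x : Fin n, x.val = k → x ≤ f x := by
    intro k
    induction k using Nat.strong_induction_on with
    | _ k ih =>
      intro x hx
      rcases Nat.eq_zero_or_pos k with rfl | hk
      · exact Fin.mk_le_of_le_val (by omega)
      · have hlt : (⟨k - 1, by omega⟩ : Fin n) < x := by
          rw [Fin.lt_def]; simp; omega
        have h1 := ih (k - 1) (by omega) ⟨k - 1, by omega⟩ rfl
        have h2 := hf hlt
        rw [Fin.le_def] at h1 ⊢
        rw [Fin.lt_def] at h2
        simp at h1
        omega
  intro x; exact key x.val x rfl

lemma eq_one_of_strictMono (w : Equiv.Perm (Fin n)) (hw : StrictMono w) : w = 1 := by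
  have hw' : StrictMono (w⁻¹ : Equiv.Perm (Fin n)) := by
    intro x y hxy
    rcases lt_trichotomy (w⁻¹ x) (w⁻¹ y) with h | h | h
    · exact h
    · exact absurd (w⁻¹.injective h) (ne_of_lt hxy)
    · have := hw h
      rw [Equiv.Perm.apply_inv_self, Equiv.Perm.apply_inv_self] at this
      exact absurd hxy (not_lt.2 this.le)
  apply Equiv.ext
  intro x
  have h1 := strictMono_le_apply hw x
  have h2 : x ≤ w⁻¹ x := strictMono_le_apply hw' x
  have h3 : w x ≤ x := by
    have := hw.monotone h2
    rwa [Equiv.Perm.apply_inv_self] at this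
  simpa using le_antisymm h3 h1

end TitsAux

namespace TitsAux

variable {n : ℕ}

lemma strictMono_of_adj {f : Fin n → Fin n}
    (hf : ∀ a (h : a + 1 < n), f (fa a h) < f (fb a h)) : StrictMono f := by
  have key : ∀ d (x y : Fin n), (y : ℕ) = (x : ℕ) + (d + 1) → f x < f y := by
    intro d
    induction d with
    | zero =>
      intro x y hxy
      have h : (x : ℕ) + 1 < n := by omega
      have hx : x = fa x h := by simp [fa]
      have hy : y = fb x h := by simp [fb, Fin.ext_iff, hxy]
      rw [hx, hy]; exact hf x h
    | succ d ih =>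
      intro x y hxy
      have h : (x : ℕ) + 1 < n := by omega
      have h1 : f x < f (fb x h) := by
        have hx : x = fa x h := by simp [fa]
        nth_rewrite 1 [hx]; exact hf x h
      exact h1.trans (ih (fb x h) y (by simp [fb] <;> omega))
  intro x y hxy
  rw [Fin.lt_def] at hxy
  exact key ((y : ℕ) - (x : ℕ) - 1) x y (by omega)

lemma eq_one_of_wlen_eq_zero (w : Equiv.Perm (Fin n)) (hw : wlen w = 0) : w = 1 := by
  apply eq_one_of_strictMono
  intro x y hxy
  have hne : w x ≠ w y := fun hc => absurd (w.injective hc) (ne_of_lt hxy)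
  rcases lt_or_gt_of_ne hne with h | h
  · exact h
  · exfalso
    have : (x, y) ∈ ipairs w := (mem_ipairs w x y).2 ⟨hxy, h⟩
    rw [wlen, Finset.card_eq_zero] at hw
    simp [hw] at this

lemma exists_descent (w : Equiv.Perm (Fin n)) (hw : w ≠ 1) :
    ∃ a, ∃ h : a + 1 < n, w⁻¹ (fb a h) < w⁻¹ (fa a h) := by
  by_contra hc
  push_neg at hc
  apply hw
  have : (w⁻¹ : Equiv.Perm (Fin n)) = 1 := by
    apply eq_one_of_strictMono
    apply strictMono_of_adj
    intro a h
    rcases lt_or_gt_of_ne (inv_ne w a h) with h1 | h1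
    · exact h1
    · exact absurd h1 (not_lt.2 (hc a h))
  simpa using congrArg (·⁻¹) this

end TitsAux

namespace TitsAux

variable {n : ℕ}

def wprod (n : ℕ) (u : List ℕ) : Equiv.Perm (Fin n) := (u.map fun k => simpleSwap n k).prod

/-- `u` is a reduced word for `π` -/
def Red (π : Equiv.Perm (Fin n)) (u : List ℕ) : Prop :=
  (∀ x ∈ u, x + 1 < n) ∧ u.length = wlen π ∧ wprod n u = π

lemma wprod_nil : wprod n [] = 1 := rfl

lemma wprod_cons (a : ℕ) (u : List ℕ) :
    wprod n (a :: u) = simpleSwap n a * wprod n u := by simp [wprod]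

lemma wlen_one : wlen (1 : Equiv.Perm (Fin n)) = 0 := by
  rw [wlen, Finset.card_eq_zero]
  ext ⟨x, y⟩
  simp only [ipairs, Finset.mem_filter, Finset.mem_univ, true_and]
  simp only [ipairs, Finset.mem_filter, Finset.mem_univ, true_and, Finset.notMem_empty,
    iff_false, not_and, Equiv.Perm.one_apply]
  exact fun h => not_lt.2 h.le

lemma wlen_prod_le (u : List ℕ) (hu : ∀ x ∈ u, x + 1 < n) :
    wlen (wprod n u) ≤ u.length := by
  induction u with
  | nil => rw [wprod_nil, wlen_one]; exact Nat.zero_le _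
  | cons a u ih =>
    have ha : a + 1 < n := hu a (by simp)
    have ih' := ih fun x hx => hu x (by simp [hx])
    rw [wprod_cons]
    rcases lt_or_gt_of_ne (inv_ne (wprod n u) a ha) with h | h
    · rw [wlen_asc a ha _ h]; simpa using ih'
    · have := wlen_desc a ha (wprod n u) h
      simp only [List.length_cons]
      omega

lemma red_cons {π : Equiv.Perm (Fin n)} {a : ℕ} {u' : List ℕ} (hr : Red π (a :: u')) :
    ∃ _ : a + 1 < n, Red (simpleSwap n a * π) u' ∧ wlen (simpleSwap n a * π) + 1 = wlen π := by
  obtain ⟨hvalid, hlen, hprod⟩ := hr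
  have ha : a + 1 < n := hvalid a (by simp)
  set W := wprod n u' with hW
  have hπ : π = simpleSwap n a * W := by rw [← hprod, wprod_cons]
  have hWle : wlen W ≤ u'.length := wlen_prod_le u' fun x hx => hvalid x (by simp [hx])
  have hlen' : u'.length + 1 = wlen π := by simpa using hlen
  have hsw : simpleSwap n a * π = W := by
    rw [hπ, ← mul_assoc, simpleSwap_mul_self, one_mul]
  rcases lt_or_gt_of_ne (inv_ne W a ha) with h | h
  · have hasc : wlen π = wlen W + 1 := by rw [hπ]; exact wlen_asc a ha W h
    refine ⟨ha, ⟨fun x hx => hvalid x (by simp [hx]), ?_, by rw [hsw]⟩, ?_⟩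
    · rw [hsw]; omega
    · rw [hsw]; omega
  · have hdesc := wlen_desc a ha W h
    rw [← hπ] at hdesc
    omega

lemma exists_red (π : Equiv.Perm (Fin n)) : ∃ u, Red π u := by
  have key : ∀ L (π : Equiv.Perm (Fin n)), wlen π = L → ∃ u, Red π u := by
    intro L
    induction L using Nat.strong_induction_on with
    | _ L ih =>
      intro π hL
      rcases Nat.eq_zero_or_pos L with rfl | hpos
      · have hπ : π = 1 := eq_one_of_wlen_eq_zero π hL
        exact ⟨[], fun x hx => absurd hx List.not_mem_nil, by simp [hL], by rw [wprod_nil, hπ]⟩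
      · have hπ : π ≠ 1 := fun hc => by rw [hc, wlen_one] at hL; omega
        obtain ⟨a, ha, hdesc⟩ := exists_descent π hπ
        have hstep := wlen_desc a ha π hdesc
        obtain ⟨z, hz⟩ := ih (wlen (simpleSwap n a * π)) (by omega) _ rfl
        refine ⟨a :: z, ?_, ?_, ?_⟩
        · intro x hx
          rcases List.mem_cons.1 hx with rfl | hx
          · exact ha
          · exact hz.1 x hx
        · simp only [List.length_cons, hz.2.1]; omega
        · rw [wprod_cons, hz.2.2, ← mul_assoc, simpleSwap_mul_self, one_mul]
  exact key (wlen π) π rfl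

end TitsAux

/-- A single move on words: a commuting move (exchanging two consecutive letters differing
by at least `2`) or a braid move (replacing consecutive `(k, k+1, k)` by `(k+1, k, k+1)`
or vice versa). -/
inductive WordMove : List ℕ → List ℕ → Prop
  | comm (u v : List ℕ) (x y : ℕ) (h : x + 2 ≤ y ∨ y + 2 ≤ x) :
      WordMove (u ++ x :: y :: v) (u ++ y :: x :: v)
  | braid (u v : List ℕ) (k : ℕ) :
      WordMove (u ++ k :: (k + 1) :: k :: v) (u ++ (k + 1) :: k :: (k + 1) :: v)
  | braid_inv (u v : List ℕ) (k : ℕ) :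
      WordMove (u ++ (k + 1) :: k :: (k + 1) :: v) (u ++ k :: (k + 1) :: k :: v)

namespace TitsAux

variable {n : ℕ}

lemma simpleSwap_inv (a : ℕ) : (simpleSwap n a)⁻¹ = simpleSwap n a :=
  inv_eq_of_mul_eq_one_right (simpleSwap_mul_self a)

lemma mul_inv_apply (a : ℕ) (w : Equiv.Perm (Fin n)) (x : Fin n) :
    (simpleSwap n a * w)⁻¹ x = w⁻¹ (simpleSwap n a x) := by
  rw [mul_inv_rev, simpleSwap_inv]; rfl

lemma simpleSwap_apply_fa (a : ℕ) (h : a + 1 < n) :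
    simpleSwap n a (fa a h) = fb a h := by
  rw [simpleSwap_eq a h]; exact Equiv.swap_apply_left _ _

lemma simpleSwap_apply_fb (a : ℕ) (h : a + 1 < n) :
    simpleSwap n a (fb a h) = fa a h := by
  rw [simpleSwap_eq a h]; exact Equiv.swap_apply_right _ _

lemma simpleSwap_apply_other (a : ℕ) (h : a + 1 < n) (x : Fin n)
    (h1 : (x : ℕ) ≠ a) (h2 : (x : ℕ) ≠ a + 1) : simpleSwap n a x = x := by
  rw [simpleSwap_eq a h]
  exact Equiv.swap_apply_of_ne_of_ne (by simp [fa, Fin.ext_iff, h1])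
    (by simp [fb, Fin.ext_iff, h2])

lemma simpleSwap_comm_far (a b : ℕ) (hab : a + 2 ≤ b ∨ b + 2 ≤ a) :
    simpleSwap n a * simpleSwap n b = simpleSwap n b * simpleSwap n a := by
  by_cases ha : a + 1 < n
  · by_cases hb : b + 1 < n
    · apply Equiv.ext
      intro x
      simp only [Equiv.Perm.mul_apply]
      by_cases hx : (x : ℕ) = a ∨ (x : ℕ) = a + 1
      · have hb1 : simpleSwap n b x = x :=
          simpleSwap_apply_other b hb x (by omega) (by omega)
        have hval : ((simpleSwap n a x : Fin n) : ℕ) = a ∨ ((simpleSwap n a x : Fin n) : ℕ) = a + 1 := by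
          rcases hx with hx | hx
          · have : x = fa a ha := by simp [fa, Fin.ext_iff, hx]
            rw [this, simpleSwap_apply_fa]; right; rfl
          · have : x = fb a ha := by simp [fb, Fin.ext_iff, hx]
            rw [this, simpleSwap_apply_fb]; left; rfl
        have hb2 : simpleSwap n b (simpleSwap n a x) = simpleSwap n a x :=
          simpleSwap_apply_other b hb _ (by omega) (by omega)
        rw [hb1, hb2]
      · push_neg at hx
        have ha1 : simpleSwap n a x = x := simpleSwap_apply_other a ha x hx.1 hx.2
        rw [ha1]
        by_cases hy : (x : ℕ) = b ∨ (x : ℕ) = b + 1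
        · have hval : ((simpleSwap n b x : Fin n) : ℕ) = b ∨ ((simpleSwap n b x : Fin n) : ℕ) = b + 1 := by
            rcases hy with hy | hy
            · have : x = fa b hb := by simp [fa, Fin.ext_iff, hy]
              rw [this, simpleSwap_apply_fa]; right; rfl
            · have : x = fb b hb := by simp [fb, Fin.ext_iff, hy]
              rw [this, simpleSwap_apply_fb]; left; rfl
          refine (simpleSwap_apply_other a ha (simpleSwap n b x) ?_ ?_) <;> omega
        · push_neg at hy
          rw [simpleSwap_apply_other b hb x hy.1 hy.2, ha1]
    · rw [show simpleSwap n b = 1 from dif_neg hb, mul_one, one_mul]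
  · rw [show simpleSwap n a = 1 from dif_neg ha, mul_one, one_mul]

lemma simpleSwap_braid (a : ℕ) (h2 : a + 2 < n) :
    simpleSwap n a * simpleSwap n (a + 1) * simpleSwap n a
      = simpleSwap n (a + 1) * simpleSwap n a * simpleSwap n (a + 1) := by
  have h1 : a + 1 < n := Nat.lt_of_succ_lt h2
  have e1 : fb a h1 = fa (a + 1) (by omega : a + 1 + 1 < n) := rfl
  rw [simpleSwap_eq a h1, simpleSwap_eq (a + 1) (by omega : a + 1 + 1 < n)]
  set x := fa a h1
  set y := fb a h1
  set z := fb (a + 1) (by omega : a + 1 + 1 < n)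
  have hyz : y = fa (a + 1) (by omega : a + 1 + 1 < n) := rfl
  rw [← hyz]
  have hxy : x ≠ y := fa_ne_fb a h1
  have hxz : x ≠ z := by simp [x, z, fa, fb, Fin.ext_iff]; omega
  have hyz' : y ≠ z := by simp [y, z, fb, Fin.ext_iff]
  calc Equiv.swap x y * Equiv.swap y z * Equiv.swap x y
      = Equiv.swap y x * Equiv.swap z y * Equiv.swap y x := by
        rw [Equiv.swap_comm x y, Equiv.swap_comm y z]
    _ = Equiv.swap x z := Equiv.swap_mul_swap_mul_swap (Ne.symm hyz') (Ne.symm hxz)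
    _ = Equiv.swap y z * Equiv.swap x y * Equiv.swap y z := by
        rw [Equiv.swap_mul_swap_mul_swap hxy hxz]
        exact Equiv.swap_comm x z

end TitsAux

namespace TitsAux

variable {n : ℕ}

lemma wordMove_symm {u v : List ℕ} (h : WordMove u v) : WordMove v u := by
  cases h with
  | comm u v x y hc => exact .comm u v y x hc.symm
  | braid u v k => exact .braid_inv u v k
  | braid_inv u v k => exact .braid u v k

lemma rtg_symm {u v : List ℕ} (h : Relation.ReflTransGen WordMove u v) :
    Relation.ReflTransGen WordMove v u := by
  induction h with
  | refl => exact .refl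
  | tail _ h ih => exact Relation.ReflTransGen.head (wordMove_symm h) ih

lemma wordMove_cons (c : ℕ) {u v : List ℕ} (h : WordMove u v) : WordMove (c :: u) (c :: v) := by
  cases h with
  | comm u v x y hc => exact .comm (c :: u) v x y hc
  | braid u v k => exact .braid (c :: u) v k
  | braid_inv u v k => exact .braid_inv (c :: u) v k

lemma rtg_cons (c : ℕ) {u v : List ℕ} (h : Relation.ReflTransGen WordMove u v) :
    Relation.ReflTransGen WordMove (c :: u) (c :: v) := by
  induction h with
  | refl => exact .refl
  | tail _ h ih => exact ih.tail (wordMove_cons c h)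

lemma move_comm_head (x y : ℕ) (t : List ℕ) (h : x + 2 ≤ y ∨ y + 2 ≤ x) :
    WordMove (x :: y :: t) (y :: x :: t) := WordMove.comm [] t x y h

lemma move_braid_head (k : ℕ) (t : List ℕ) :
    WordMove (k :: (k + 1) :: k :: t) ((k + 1) :: k :: (k + 1) :: t) := WordMove.braid [] t k

lemma ss_cancel (a : ℕ) (w : Equiv.Perm (Fin n)) :
    simpleSwap n a * (simpleSwap n a * w) = w := by
  rw [← mul_assoc, simpleSwap_mul_self, one_mul]

theorem red_connect : ∀ L, ∀ (π : Equiv.Perm (Fin n)) (u v : List ℕ), Red π u → Red π v →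
    wlen π = L → Relation.ReflTransGen WordMove u v := by
  intro L
  induction L using Nat.strong_induction_on with
  | _ L ih =>
    have key : ∀ (π : Equiv.Perm (Fin n)) (a : ℕ) (u' v' : List ℕ), Red π (a :: u') →
        Red π ((a + 1) :: v') → wlen π = L →
        Relation.ReflTransGen WordMove (a :: u') ((a + 1) :: v') := by
      intro π a u' v' hu hv hL
      obtain ⟨ha, hru', hdu⟩ := red_cons hu
      obtain ⟨hb, hrv', hdv⟩ := red_cons hv
      have hda : π⁻¹ (fb a ha) < π⁻¹ (fa a ha) := (descent_iff a ha π).1 hdu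
      have hdb : π⁻¹ (fb (a + 1) hb) < π⁻¹ (fa (a + 1) hb) := (descent_iff (a + 1) hb π).1 hdv
      have d1 : (simpleSwap n a * π)⁻¹ (fb (a + 1) hb) < (simpleSwap n a * π)⁻¹ (fa (a + 1) hb) := by
        rw [mul_inv_apply, mul_inv_apply,
          simpleSwap_apply_other a ha (fb (a + 1) hb) (by simp [fb] <;> omega) (by simp [fb] <;> omega),
          show fa (a + 1) hb = fb a ha from rfl, simpleSwap_apply_fb]
        exact hdb.trans hda
      have hstep2 := wlen_desc (a + 1) hb (simpleSwap n a * π) d1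
      have d2 : (simpleSwap n (a + 1) * (simpleSwap n a * π))⁻¹ (fb a ha)
          < (simpleSwap n (a + 1) * (simpleSwap n a * π))⁻¹ (fa a ha) := by
        rw [mul_inv_apply, mul_inv_apply, mul_inv_apply, mul_inv_apply,
          show fb a ha = fa (a + 1) hb from rfl, simpleSwap_apply_fa (a + 1) hb,
          simpleSwap_apply_other a ha (fb (a + 1) hb) (by simp [fb] <;> omega) (by simp [fb] <;> omega),
          simpleSwap_apply_other (a + 1) hb (fa a ha) (by simp [fa] <;> omega) (by simp [fa] <;> omega),
          simpleSwap_apply_fa a ha]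
        exact hdb
      have hstep3 := wlen_desc a ha (simpleSwap n (a + 1) * (simpleSwap n a * π)) d2
      obtain ⟨z, hz⟩ := exists_red (simpleSwap n a * (simpleSwap n (a + 1) * (simpleSwap n a * π)))
      have hzlen := hz.2.1
      have hR1 : Red (simpleSwap n a * π) ((a + 1) :: a :: z) := by
        refine ⟨?_, ?_, ?_⟩
        · intro x hx
          rcases List.mem_cons.1 hx with rfl | hx
          · exact hb
          · rcases List.mem_cons.1 hx with rfl | hx
            · exact ha
            · exact hz.1 x hx
        · simp only [List.length_cons, hzlen]; omega
        · rw [wprod_cons, wprod_cons, hz.2.2, ss_cancel, ss_cancel]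
      have hR2 : Red (simpleSwap n (a + 1) * π) (a :: (a + 1) :: z) := by
        refine ⟨?_, ?_, ?_⟩
        · intro x hx
          rcases List.mem_cons.1 hx with rfl | hx
          · exact ha
          · rcases List.mem_cons.1 hx with rfl | hx
            · exact hb
            · exact hz.1 x hx
        · simp only [List.length_cons, hzlen]; omega
        · rw [wprod_cons, wprod_cons, hz.2.2]
          simp only [← mul_assoc]
          rw [simpleSwap_braid a hb, mul_assoc (simpleSwap n (a + 1) * simpleSwap n a),
            simpleSwap_mul_self, mul_one, mul_assoc (simpleSwap n (a + 1)),
            simpleSwap_mul_self, mul_one]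
      have hu2 : Relation.ReflTransGen WordMove u' ((a + 1) :: a :: z) :=
        ih (wlen (simpleSwap n a * π)) (by omega) _ u' _ hru' hR1 rfl
      have hv2 : Relation.ReflTransGen WordMove v' (a :: (a + 1) :: z) :=
        ih (wlen (simpleSwap n (a + 1) * π)) (by omega) _ v' _ hrv' hR2 rfl
      exact Relation.ReflTransGen.trans (rtg_cons a hu2)
        (Relation.ReflTransGen.trans
          (Relation.ReflTransGen.single (move_braid_head a z))
          (rtg_symm (rtg_cons (a + 1) hv2)))
    intro π u v hu hv hL
    cases u with
    | nil =>
      have h0 : wlen π = 0 := by simpa using hu.2.1.symm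
      have hv0 : v.length = 0 := by rw [hv.2.1, h0]
      exact (List.length_eq_zero_iff.1 hv0) ▸ Relation.ReflTransGen.refl
    | cons a u' =>
      cases v with
      | nil =>
        have h0 : wlen π = 0 := by simpa using hv.2.1.symm
        have hc : (a :: u').length = 0 := by rw [hu.2.1, h0]
        simp at hc
      | cons b v' =>
        obtain ⟨ha, hru', hdu⟩ := red_cons hu
        obtain ⟨hb, hrv', hdv⟩ := red_cons hv
        by_cases hab : a = b
        · subst hab
          exact rtg_cons a (ih (wlen (simpleSwap n a * π)) (by omega) _ u' v' hru' hrv' rfl)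
        · rcases (show b = a + 1 ∨ a = b + 1 ∨ (a + 2 ≤ b ∨ b + 2 ≤ a) by omega) with rfl | hba | hfar
          · exact key π a u' v' hu hv hL
          · subst hba
            exact rtg_symm (key π b v' u' hv hu hL)
          · have hda : π⁻¹ (fb a ha) < π⁻¹ (fa a ha) := (descent_iff a ha π).1 hdu
            have hdb : π⁻¹ (fb b hb) < π⁻¹ (fa b hb) := (descent_iff b hb π).1 hdv
            have d1 : (simpleSwap n a * π)⁻¹ (fb b hb) < (simpleSwap n a * π)⁻¹ (fa b hb) := by
              rw [mul_inv_apply, mul_inv_apply,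
                simpleSwap_apply_other a ha (fb b hb) (by simp [fb] <;> omega)
                  (by simp [fb] <;> omega),
                simpleSwap_apply_other a ha (fa b hb) (by simp [fa] <;> omega)
                  (by simp [fa] <;> omega)]
              exact hdb
            have hstep2 := wlen_desc b hb (simpleSwap n a * π) d1
            obtain ⟨z, hz⟩ := exists_red (simpleSwap n b * (simpleSwap n a * π))
            have hR1 : Red (simpleSwap n a * π) (b :: z) := by
              refine ⟨?_, ?_, ?_⟩
              · intro x hx
                rcases List.mem_cons.1 hx with rfl | hx
                · exact hb
                · exact hz.1 x hx
              · have := hz.2.1; simp only [List.length_cons, this]; omega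
              · rw [wprod_cons, hz.2.2, ss_cancel]
            have hR2 : Red (simpleSwap n b * π) (a :: z) := by
              refine ⟨?_, ?_, ?_⟩
              · intro x hx
                rcases List.mem_cons.1 hx with rfl | hx
                · exact ha
                · exact hz.1 x hx
              · have := hz.2.1; simp only [List.length_cons, this]; omega
              · rw [wprod_cons, hz.2.2]
                simp only [← mul_assoc]
                rw [simpleSwap_comm_far a b hfar, mul_assoc (simpleSwap n b),
                  simpleSwap_mul_self, mul_one]
            have hu2 := ih (wlen (simpleSwap n a * π)) (by omega) _ u' _ hru' hR1 rfl
            have hv2 := ih (wlen (simpleSwap n b * π)) (by omega) _ v' _ hrv' hR2 rfl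
            exact Relation.ReflTransGen.trans (rtg_cons a hu2)
              (Relation.ReflTransGen.trans
                (Relation.ReflTransGen.single (move_comm_head a b z hfar))
                (rtg_symm (rtg_cons b hv2)))

end TitsAux


namespace TitsAux

variable {n : ℕ}

lemma ipairs_reverse : ipairs (reversePerm n) = Finset.univ.filter fun p : Fin n × Fin n => p.1 < p.2 := by
  ext ⟨x, y⟩
  simp only [ipairs, Finset.mem_filter, Finset.mem_univ, true_and]
  have hx : reversePerm n x = x.rev := rfl
  have hy : reversePerm n y = y.rev := rfl
  rw [hx, hy, Fin.rev_lt_rev]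
  tauto

lemma wlen_reverse : wlen (reversePerm n) = n * (n - 1) / 2 := by
  rw [wlen, ipairs_reverse]
  have h1 : (Finset.univ.filter fun p : Fin n × Fin n => p.1 < p.2).card = ∑ y : Fin n, (y : ℕ) := by
    rw [Finset.card_filter, Fintype.sum_prod_type, Finset.sum_comm]
    refine Finset.sum_congr rfl fun y _ => ?_
    rw [← Finset.card_filter]
    have : Finset.univ.filter (fun x : Fin n => x < y) = Finset.Iio y := by
      ext x; simp
    rw [this, Fin.card_Iio]
  rw [h1, Fin.sum_univ_eq_sum_range (fun i => i) n, Finset.sum_range_id]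

end TitsAux

/-- A reduced word of order `n`: a word of length `n(n-1)/2` in the letters `{0,…,n-2}`
(`0`-based) whose composition of simple transpositions is the reverse permutation. -/
def IsReducedWord (n : ℕ) (w : List ℕ) : Prop :=
  w.length = n * (n - 1) / 2 ∧ (∀ x ∈ w, x + 1 < n) ∧
    (w.map fun k => simpleSwap n k).prod = reversePerm n

/-- Tits: any reduced word of order `n` may be transformed into any other
by a finite sequence of commuting moves and braid moves. -/
theorem tits_connectivity (n : ℕ) (hn : 1 ≤ n) (w₁ w₂ : List ℕ)
    (h₁ : IsReducedWord n w₁) (h₂ : IsReducedWord n w₂) :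
    Relation.ReflTransGen WordMove w₁ w₂ := by
  have hr : ∀ w : List ℕ, IsReducedWord n w → TitsAux.Red (reversePerm n) w := by
    intro w hw
    exact ⟨hw.2.1, by rw [hw.1, TitsAux.wlen_reverse], hw.2.2⟩
  exact TitsAux.red_connect (TitsAux.wlen (reversePerm n)) (reversePerm n) w₁ w₂
    (hr w₁ h₁) (hr w₂ h₂) rfl
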